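/- For a domain D ⊆ ℂ, the closure of S_n(D) equals π_n((closure D)^n), and the topological boundary of S_n(D) equals π_n(∂D × (closure D)^{n-1}). -/

import Mathlib

/-- The symmetrization map `π_n : ℂ^n → ℂ^n`, whose `j`-th coordinate is the
`(j+1)`-st elementary symmetric polynomial of the entries. -/
noncomputable def symPoly (n : ℕ) (lam : Fin n → ℂ) : Fin n → ℂ :=
  fun j => ∑ t ∈ Finset.powersetCard ((j : ℕ) + 1) Finset.univ, ∏ i ∈ t, lam i

/-- The `n`-fold symmetric product `S_n(D) = π_n(D^n)` of a planar set `D`. -/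
noncomputable def symProd (n : ℕ) (D : Set ℂ) : Set (Fin n → ℂ) :=
  symPoly n '' {lam | ∀ i, lam i ∈ D}


/-- The multiset of entries of a tuple. -/
noncomputable def tupMS (n : ℕ) (lam : Fin n → ℂ) : Multiset ℂ := Finset.univ.val.map lam

lemma card_tupMS (n : ℕ) (lam : Fin n → ℂ) : Multiset.card (tupMS n lam) = n := by
  simp [tupMS]

lemma mem_tupMS (n : ℕ) (lam : Fin n → ℂ) (i : Fin n) : lam i ∈ tupMS n lam :=
  Multiset.mem_map_of_mem _ (Finset.mem_univ i)

lemma symPoly_apply (n : ℕ) (lam : Fin n → ℂ) (j : Fin n) :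
    symPoly n lam j = (tupMS n lam).esymm ((j : ℕ) + 1) := by
  rw [symPoly, tupMS, Finset.esymm_map_val]

open Polynomial

/-- The monic polynomial with roots `lam`. -/
noncomputable def tupPoly (n : ℕ) (lam : Fin n → ℂ) : ℂ[X] :=
  ((tupMS n lam).map fun a => X - C a).prod

lemma monic_tupPoly (n : ℕ) (lam : Fin n → ℂ) : (tupPoly n lam).Monic :=
  monic_multiset_prod_of_monic _ _ fun a _ => monic_X_sub_C a

lemma natDegree_tupPoly (n : ℕ) (lam : Fin n → ℂ) : (tupPoly n lam).natDegree = n := by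
  rw [tupPoly, natDegree_multiset_prod_X_sub_C_eq_card, card_tupMS]

lemma roots_tupPoly (n : ℕ) (lam : Fin n → ℂ) : (tupPoly n lam).roots = tupMS n lam := by
  rw [tupPoly, roots_multiset_prod_X_sub_C]

lemma coeff_tupPoly (n : ℕ) (lam : Fin n → ℂ) {k : ℕ} (hk : k ≤ n) :
    (tupPoly n lam).coeff k = (-1) ^ (n - k) * (tupMS n lam).esymm (n - k) := by
  have h : k ≤ Multiset.card (tupMS n lam) := by rw [card_tupMS]; exact hk
  rw [tupPoly, Multiset.prod_X_sub_C_coeff _ h, card_tupMS]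

lemma symPoly_eq_iff {n : ℕ} {lam mu : Fin n → ℂ} :
    symPoly n lam = symPoly n mu ↔ tupMS n lam = tupMS n mu := by
  constructor
  · intro h
    have hP : tupPoly n lam = tupPoly n mu := by
      ext k
      rcases le_or_gt k n with hk | hk
      · rw [coeff_tupPoly n lam hk, coeff_tupPoly n mu hk]
        rcases Nat.eq_zero_or_pos (n - k) with h0 | h0
        · rw [h0]; simp [Multiset.esymm]
        · have hlt : n - k - 1 < n := by omega
          have he : n - k = (⟨n - k - 1, hlt⟩ : Fin n) + 1 := by simp; omega
          rw [he, ← symPoly_apply, ← symPoly_apply, h]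
      · rw [coeff_eq_zero_of_natDegree_lt (by rw [natDegree_tupPoly]; exact hk),
          coeff_eq_zero_of_natDegree_lt (by rw [natDegree_tupPoly]; exact hk)]
    rw [← roots_tupPoly n lam, ← roots_tupPoly n mu, hP]
  · intro h
    funext j
    rw [symPoly_apply, symPoly_apply, h]

lemma symPoly_comp_perm (n : ℕ) (lam : Fin n → ℂ) (σ : Equiv.Perm (Fin n)) :
    symPoly n (lam ∘ σ) = symPoly n lam := by
  rw [symPoly_eq_iff]
  show Multiset.map (lam ∘ σ) Finset.univ.val = Multiset.map lam Finset.univ.val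
  rw [← Multiset.map_map]
  congr 1
  have : (Finset.univ.map σ.toEmbedding).val = Finset.univ.val := by
    rw [Finset.map_univ_equiv]
  simpa [Finset.map] using this

lemma symPoly_surjective (n : ℕ) : Function.Surjective (symPoly n) := by
  intro z
  set q : ℂ[X] := X ^ n + ∑ j : Fin n, C ((-1) ^ ((j : ℕ) + 1) * z j) * X ^ (n - 1 - (j : ℕ))
    with hqdef
  rcases Nat.eq_zero_or_pos n with rfl | hn
  · exact ⟨fun i => 0, funext fun j => j.elim0⟩
  have hdeg_sum : (∑ j : Fin n, C ((-1) ^ ((j : ℕ) + 1) * z j) * X ^ (n - 1 - (j : ℕ))).degree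
      < (n : WithBot ℕ) := by
    apply lt_of_le_of_lt (degree_sum_le _ _)
    rw [Finset.sup_lt_iff (by exact_mod_cast WithBot.bot_lt_coe n)]
    intro j _
    apply lt_of_le_of_lt (degree_C_mul_X_pow_le _ _)
    exact_mod_cast Nat.lt_of_le_of_lt (Nat.sub_le _ _) (by omega)
  have hmonic : q.Monic := monic_X_pow_add hdeg_sum
  have hdeg : q.natDegree = n := by
    have : q.degree = n := by
      rw [hqdef]
      rw [add_comm]
      rw [degree_add_eq_right_of_degree_lt (by rwa [degree_X_pow])]
      exact degree_X_pow n
    exact natDegree_eq_of_degree_eq_some this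
  have hcard : Multiset.card q.roots = n := by
    rw [← hdeg, ← splits_iff_card_roots]
    exact IsAlgClosed.splits q
  -- coefficients of q
  have hcoeff : ∀ j : Fin n, q.coeff (n - ((j : ℕ) + 1)) = (-1) ^ ((j : ℕ) + 1) * z j := by
    intro j
    have hj : (j : ℕ) < n := j.isLt
    have h1 : n - ((j : ℕ) + 1) = n - 1 - (j : ℕ) := by omega
    have h2 : n - 1 - (j : ℕ) ≠ n := by omega
    rw [hqdef, coeff_add, coeff_X_pow, if_neg (by omega), zero_add, h1, finset_sum_coeff]
    rw [Finset.sum_eq_single j]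
    · rw [coeff_C_mul, coeff_X_pow, if_pos rfl, mul_one]
    · intro j' _ hj'
      rw [coeff_C_mul, coeff_X_pow, if_neg, mul_zero]
      intro hc
      exact hj' (Fin.ext (by omega))
    · intro hmem
      exact absurd (Finset.mem_univ j) hmem
  -- build the tuple from the roots
  set l : List ℂ := q.roots.toList with hl
  have hlen : l.length = n := by rw [hl, Multiset.length_toList, hcard]
  refine ⟨fun i => l.get (Fin.cast hlen.symm i), ?_⟩
  have hms : tupMS n (fun i => l.get (Fin.cast hlen.symm i)) = q.roots := by
    show Multiset.map _ Finset.univ.val = q.roots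
    have huniv : (Finset.univ : Finset (Fin n)).val = ↑(List.finRange n) := rfl
    rw [huniv, Multiset.map_coe, ← List.ofFn_eq_map]
    rw [← Multiset.coe_toList q.roots, ← hl]
    congr 1
    apply List.ext_getElem
    · simp [hlen]
    · intro i h1 h2
      simp [List.getElem_ofFn]
  funext j
  rw [symPoly_apply, hms]
  have hj1 : (j : ℕ) + 1 ≤ n := j.isLt
  have hk : n - ((j : ℕ) + 1) ≤ q.natDegree := by rw [hdeg]; omega
  have := Polynomial.coeff_eq_esymm_roots_of_card (by rw [hdeg]; exact hcard) hk
  rw [hcoeff j, hmonic.leadingCoeff, one_mul, hdeg] at this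
  have hnk : n - (n - ((j : ℕ) + 1)) = (j : ℕ) + 1 := by omega
  rw [hnk] at this
  have hne : ((-1 : ℂ)) ^ ((j : ℕ) + 1) ≠ 0 := pow_ne_zero _ (by norm_num)
  exact (mul_left_cancel₀ hne this).symm

lemma continuous_symPoly (n : ℕ) : Continuous (symPoly n) := by
  apply continuous_pi
  intro j
  exact continuous_finset_sum _ fun t _ => continuous_finset_prod _ fun i _ => continuous_apply i

lemma isRoot_tupPoly (n : ℕ) (lam : Fin n → ℂ) (i : Fin n) :
    (tupPoly n lam).IsRoot (lam i) := by
  have : lam i ∈ (tupPoly n lam).roots := by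
    rw [roots_tupPoly]; exact mem_tupMS n lam i
  exact isRoot_of_mem_roots this

lemma isProperMap_symPoly (n : ℕ) : IsProperMap (symPoly n) := by
  rw [isProperMap_iff_isCompact_preimage]
  refine ⟨continuous_symPoly n, fun K hK => ?_⟩
  obtain ⟨R, hRK⟩ := hK.isBounded.subset_closedBall 0
  have hR0 : (0 : ℝ) ≤ max R 0 := le_max_right _ _
  refine (isCompact_closedBall (0 : Fin n → ℂ) (max R 0 + 1)).of_isClosed_subset
    (hK.isClosed.preimage (continuous_symPoly n)) ?_
  intro lam hlam
  rw [Metric.mem_closedBall, dist_zero_right]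
  have hz : symPoly n lam ∈ K := hlam
  have hznorm : ‖symPoly n lam‖ ≤ max R 0 := by
    have := hRK hz
    rw [Metric.mem_closedBall, dist_zero_right] at this
    exact this.trans (le_max_left _ _)
  rw [pi_norm_le_iff_of_nonneg (by positivity)]
  intro i
  -- lam i is a root of the monic polynomial tupPoly n lam
  have hlt := Polynomial.IsRoot.norm_lt_cauchyBound
    ((monic_tupPoly n lam).ne_zero) (isRoot_tupPoly n lam i)
  have key : ∀ k ∈ Finset.range (tupPoly n lam).natDegree,
      ‖(tupPoly n lam).coeff k‖₊ ≤ (max R 0).toNNReal := by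
    intro k hk
    rw [Finset.mem_range, natDegree_tupPoly] at hk
    have hlt2 : n - k - 1 < n := by omega
    have h2 : (tupPoly n lam).coeff k = (-1) ^ (n - k) * symPoly n lam ⟨n - k - 1, hlt2⟩ := by
      rw [coeff_tupPoly n lam hk.le, symPoly_apply]
      have : n - k - 1 + 1 = n - k := by omega
      simp [this]
    have h3 : ‖(tupPoly n lam).coeff k‖ ≤ max R 0 := by
      rw [h2, norm_mul, norm_pow, norm_neg, norm_one, one_pow, one_mul]
      exact (norm_le_pi_norm (symPoly n lam) _).trans hznorm
    rw [← NNReal.coe_le_coe, coe_nnnorm, Real.coe_toNNReal _ hR0]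
    exact h3
  have hcb : Polynomial.cauchyBound (tupPoly n lam) ≤ (max R 0).toNNReal + 1 := by
    rw [Polynomial.cauchyBound, (monic_tupPoly n lam).leadingCoeff, nnnorm_one, div_one]
    exact add_le_add_left (Finset.sup_le key) 1
  have h4 := hlt.le.trans hcb
  rw [← NNReal.coe_le_coe, coe_nnnorm] at h4
  refine h4.trans ?_
  push_cast [Real.coe_toNNReal _ hR0]
  exact le_refl _


/-- For a domain `D ⊆ ℂ`: `closure (S_n(D)) = π_n((closure D)^n)` and
`frontier (S_n(D)) = π_n(∂D × (closure D)^{n-1})`. -/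
theorem closure_frontier_symProd (n : ℕ) (hn : 0 < n) (D : Set ℂ)
    (hDopen : IsOpen D) (hDconn : IsConnected D) :
    closure (symProd n D) = symPoly n '' {lam | ∀ i, lam i ∈ closure D} ∧
    frontier (symProd n D) =
      symPoly n '' {lam | lam ⟨0, hn⟩ ∈ frontier D ∧
        ∀ i : Fin n, i ≠ ⟨0, hn⟩ → lam i ∈ closure D} := by
  have hcont := continuous_symPoly n
  have hclosed : IsClosedMap (symPoly n) := (isProperMap_symPoly n).isClosedMap
  have hpiD : {lam : Fin n → ℂ | ∀ i, lam i ∈ D} = Set.pi Set.univ (fun _ => D) := by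
    ext lam; simp [Set.mem_pi]
  have hpiC : {lam : Fin n → ℂ | ∀ i, lam i ∈ closure D}
      = Set.pi Set.univ (fun _ => closure D) := by
    ext lam; simp [Set.mem_pi]
  have hclC : IsClosed {lam : Fin n → ℂ | ∀ i, lam i ∈ closure D} := by
    rw [hpiC]; exact isClosed_set_pi fun i _ => isClosed_closure
  have hclosureA : closure {lam : Fin n → ℂ | ∀ i, lam i ∈ D}
      = {lam : Fin n → ℂ | ∀ i, lam i ∈ closure D} := by
    rw [hpiD, hpiC, closure_pi_set]
  have h1 : closure (symProd n D) = symPoly n '' {lam | ∀ i, lam i ∈ closure D} := by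
    apply Set.Subset.antisymm
    · exact closure_minimal (Set.image_mono fun lam h i => subset_closure (h i))
        (hclosed _ hclC)
    · rw [← hclosureA]
      exact image_closure_subset_closure_image hcont
  have hkey : ∀ (lam mu : Fin n → ℂ), symPoly n lam = symPoly n mu →
      ∀ i, ∃ i', mu i' = lam i := by
    intro lam mu h i
    have h2 := symPoly_eq_iff.mp h
    have hm : lam i ∈ tupMS n mu := h2 ▸ mem_tupMS n lam i
    rcases Multiset.mem_map.mp hm with ⟨i', _, hi'⟩
    exact ⟨i', hi'⟩
  have hopen : IsOpen (symProd n D) := by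
    rw [← isClosed_compl_iff]
    have hcompl : (symProd n D)ᶜ = symPoly n '' {lam | ∃ i, lam i ∈ Dᶜ} := by
      ext z
      simp only [Set.mem_compl_iff, symProd, Set.mem_image, Set.mem_setOf_eq]
      constructor
      · intro hz
        obtain ⟨lam, hlam⟩ := symPoly_surjective n z
        refine ⟨lam, ?_, hlam⟩
        by_contra hc
        push_neg at hc
        exact hz ⟨lam, hc, hlam⟩
      · rintro ⟨lam, ⟨i, hi⟩, rfl⟩ ⟨mu, hmu, hmueq⟩
        obtain ⟨i', hi'⟩ := hkey lam mu hmueq.symm i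
        exact hi (hi' ▸ hmu i')
    rw [hcompl]
    apply hclosed
    have he : {lam : Fin n → ℂ | ∃ i, lam i ∈ Dᶜ}
        = ⋃ i, (fun lam : Fin n → ℂ => lam i) ⁻¹' Dᶜ := by
      ext lam; simp
    rw [he]
    exact isClosed_iUnion_of_finite fun i =>
      (isClosed_compl_iff.mpr hDopen).preimage (continuous_apply i)
  refine ⟨h1, ?_⟩
  have hfr : frontier D = closure D \ D := hDopen.frontier_eq
  rw [frontier, hopen.interior_eq, h1]
  apply Set.Subset.antisymm
  · rintro z ⟨⟨lam, hlam, rfl⟩, hz2⟩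
    have hex : ∃ i, lam i ∉ D := by
      by_contra hc; push_neg at hc
      exact hz2 ⟨lam, hc, rfl⟩
    obtain ⟨i0, hi0⟩ := hex
    set σ := Equiv.swap (⟨0, hn⟩ : Fin n) i0 with hσ
    refine ⟨lam ∘ σ, ⟨?_, ?_⟩, symPoly_comp_perm n lam σ⟩
    · show lam (σ ⟨0, hn⟩) ∈ frontier D
      rw [hσ, Equiv.swap_apply_left, hfr]
      exact ⟨hlam i0, hi0⟩
    · intro i hi
      exact hlam (σ i)
  · rintro z ⟨lam, ⟨h0, hrest⟩, rfl⟩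
    constructor
    · refine ⟨lam, fun i => ?_, rfl⟩
      by_cases hi : i = ⟨0, hn⟩
      · rw [hi]; exact frontier_subset_closure h0
      · exact hrest i hi
    · rintro ⟨mu, hmu, hmueq⟩
      obtain ⟨i', hi'⟩ := hkey lam mu hmueq.symm ⟨0, hn⟩
      have hD : lam ⟨0, hn⟩ ∈ D := hi' ▸ hmu i'
      rw [hfr] at h0
      exact h0.2 hD
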